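/- arXiv:2002.01348 — 3 statements merged into one kernel-verified Lean document; each statement's English description precedes it below -/
import Mathlib

section
/- Suppose 1−ρ ≤ Δ·e^α ≤ 1 with ρ ∈ (0,1), Δ > 0, α ≥ 0. Then ν* = Δe^α/(2Δe^α − 1 + ρ) satisfies 1/(1+ρ) ≤ ν* ≤ 1, and ℓ(ν*) = (1/2)·log((1+ρ)/(2Δe^α + ρ − 1)). -/
open Real Set

noncomputable def ell (ρ Δ α ν : ℝ) : ℝ :=
  (1/2) * Real.log ((2*π*Real.exp 1)^2 * (1 - ρ^2)) - ν*α - ν * Real.log (2*π*Real.exp 1*Δ)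
    + (ν/2) * Real.log (ν^2/(2*ν - 1))
    - ((1-ν)/2) * Real.log ((2*π*Real.exp 1)^2 * (1-ρ)^2/(2*ν - 1))

theorem stmt_2 (ρ Δ α : ℝ) (hρ : ρ ∈ Set.Ioo (0:ℝ) 1) (hΔ : 0 < Δ) (hα : 0 ≤ α)
    (h1 : 1 - ρ ≤ Δ * Real.exp α) (h2 : Δ * Real.exp α ≤ 1) :
    1/(1+ρ) ≤ Δ * Real.exp α / (2*Δ*Real.exp α - 1 + ρ) ∧
    Δ * Real.exp α / (2*Δ*Real.exp α - 1 + ρ) ≤ 1 ∧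
    ell ρ Δ α (Δ * Real.exp α / (2*Δ*Real.exp α - 1 + ρ))
      = (1/2) * Real.log ((1+ρ)/(2*Δ*Real.exp α + ρ - 1)) := by
  obtain ⟨hρ0, hρ1⟩ := hρ
  have hexp : (0:ℝ) < Real.exp α := Real.exp_pos α
  have ht : 0 < Δ * Real.exp α := by positivity
  have hD : 0 < 2*Δ*Real.exp α - 1 + ρ := by nlinarith
  have hρm : (0:ℝ) < 1 - ρ := by linarith
  have hρp : (0:ℝ) < 1 + ρ := by linarith
  have hC : (0:ℝ) < 2*π*Real.exp 1 := by positivity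
  refine ⟨?_, ?_, ?_⟩
  · rw [div_le_div_iff₀ hρp hD]
    nlinarith
  · rw [div_le_one hD]
    nlinarith
  · set ν := Δ * Real.exp α / (2*Δ*Real.exp α - 1 + ρ) with hν
    have h2ν : 2*ν - 1 = (1-ρ)/(2*Δ*Real.exp α - 1 + ρ) := by
      rw [hν]; field_simp; ring
    have h2νpos : 0 < 2*ν - 1 := by rw [h2ν]; positivity
    have e1 : ν^2/(2*ν - 1) = (Δ*Real.exp α)^2 / ((2*Δ*Real.exp α - 1 + ρ)*(1-ρ)) := by
      rw [h2ν, hν]; field_simp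
    have e2 : (2*π*Real.exp 1)^2 * (1-ρ)^2/(2*ν - 1)
        = (2*π*Real.exp 1)^2 * ((1-ρ)*(2*Δ*Real.exp α - 1 + ρ)) := by
      rw [h2ν]; field_simp
    have e3 : 2*Δ*Real.exp α + ρ - 1 = 2*Δ*Real.exp α - 1 + ρ := by ring
    rw [ell, e1, e2, e3]
    have lt : Real.log (Δ * Real.exp α) = Real.log Δ + α := by
      rw [Real.log_mul hΔ.ne' hexp.ne', Real.log_exp]
    have l1 : Real.log ((2*π*Real.exp 1)^2 * (1 - ρ^2))
        = 2*Real.log (2*π*Real.exp 1) + Real.log (1-ρ) + Real.log (1+ρ) := by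
      rw [show (1 - ρ^2) = (1-ρ)*(1+ρ) by ring, Real.log_mul (by positivity) (by positivity),
        Real.log_mul hρm.ne' hρp.ne', Real.log_pow]
      push_cast; ring
    have l2 : Real.log (2*π*Real.exp 1*Δ) = Real.log (2*π*Real.exp 1) + Real.log Δ := by
      rw [Real.log_mul hC.ne' hΔ.ne']
    have l3 : Real.log ((Δ*Real.exp α)^2 / ((2*Δ*Real.exp α - 1 + ρ)*(1-ρ)))
        = 2*(Real.log Δ + α) - Real.log (2*Δ*Real.exp α - 1 + ρ) - Real.log (1-ρ) := by
      rw [Real.log_div (by positivity) (by positivity), Real.log_mul hD.ne' hρm.ne',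
        Real.log_pow, lt]
      push_cast; ring
    have l4 : Real.log ((2*π*Real.exp 1)^2 * ((1-ρ)*(2*Δ*Real.exp α - 1 + ρ)))
        = 2*Real.log (2*π*Real.exp 1) + Real.log (1-ρ) + Real.log (2*Δ*Real.exp α - 1 + ρ) := by
      rw [Real.log_mul (by positivity) (by positivity), Real.log_mul hρm.ne' hD.ne',
        Real.log_pow]
      push_cast; ring
    have l5 : Real.log ((1+ρ)/(2*Δ*Real.exp α - 1 + ρ))
        = Real.log (1+ρ) - Real.log (2*Δ*Real.exp α - 1 + ρ) :=
      Real.log_div hρp.ne' hD.ne'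
    rw [l1, l2, l3, l4, l5]
    ring
end

section
/- Suppose 1−ρ ≤ Δ·e^α ≤ 1 with ρ ∈ (0,1), Δ > 0, α ≥ 0, and let ν* = Δe^α/(2Δe^α − 1 + ρ). Then for all ν with 1/(1+ρ) ≤ ν ≤ 1, ℓ(ν) ≤ ℓ(ν*) = (1/2)·log((1+ρ)/(2Δe^α + ρ − 1)); that is, ν* maximizes ℓ over [1/(1+ρ), 1]. -/
open Real Set

lemma key_log (u v : ℝ) (hu : 0 < u) (hv : 0 < v) :
    (u+1) * (Real.log (u+1) - Real.log (v+1)) ≤ u * (Real.log u - Real.log v) := by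
  have hu1 : (0:ℝ) < u + 1 := by linarith
  have hv1 : (0:ℝ) < v + 1 := by linarith
  have h1 := Real.log_le_sub_one_of_pos (show 0 < v*(u+1)/(u*(v+1)) by positivity)
  have h2 := Real.log_le_sub_one_of_pos (show 0 < (u+1)/(v+1) by positivity)
  rw [Real.log_div (by positivity) (by positivity), Real.log_mul hv.ne' hu1.ne',
      Real.log_mul hu.ne' hv1.ne'] at h1
  rw [Real.log_div hu1.ne' hv1.ne'] at h2
  have h1' := mul_le_mul_of_nonneg_left h1 hu.le
  have e1 : u * (v*(u+1)/(u*(v+1)) - 1) = v*(u+1)/(v+1) - u := by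
    field_simp
  have e2 : v*(u+1)/(v+1) - u + ((u+1)/(v+1) - 1) = 0 := by
    field_simp; ring
  nlinarith [h1', h2, e1, e2]

lemma ell_eq (ρ Δ α ν : ℝ) (hρ1 : (0:ℝ) < 1 - ρ) (hΔ : 0 < Δ) (hν : 1/2 < ν) :
    ell ρ Δ α ν = (1/2) * Real.log ((2*π*Real.exp 1)^2 * (1 - ρ^2))
      - Real.log (2*π*Real.exp 1*(1-ρ))
      + (-α - Real.log Δ + Real.log (1-ρ)) * ν
      + ν * Real.log ν - ((2*ν - 1)/2) * Real.log (2*ν - 1) := by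
  have hC : (0:ℝ) < 2*π*Real.exp 1 := by positivity
  have h2ν : (0:ℝ) < 2*ν - 1 := by linarith
  have hν0 : (0:ℝ) < ν := by linarith
  unfold ell
  rw [show (2*π*Real.exp 1)^2*(1-ρ)^2 = (2*π*Real.exp 1*(1-ρ))^2 by ring,
      Real.log_div (pow_ne_zero 2 hν0.ne') h2ν.ne',
      Real.log_div (by positivity) h2ν.ne',
      Real.log_pow, Real.log_pow,
      Real.log_mul hC.ne' hΔ.ne', Real.log_mul hC.ne' hρ1.ne']
  push_cast
  ring

theorem stmt_3 (ρ Δ α : ℝ) (hρ : ρ ∈ Set.Ioo (0:ℝ) 1) (hΔ : 0 < Δ) (hα : 0 ≤ α)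
    (h1 : 1 - ρ ≤ Δ * Real.exp α) (h2 : Δ * Real.exp α ≤ 1) :
    (∀ ν ∈ Set.Icc (1/(1+ρ)) 1,
      ell ρ Δ α ν ≤ ell ρ Δ α (Δ * Real.exp α / (2*Δ*Real.exp α - 1 + ρ))) ∧
    ell ρ Δ α (Δ * Real.exp α / (2*Δ*Real.exp α - 1 + ρ))
      = (1/2) * Real.log ((1+ρ)/(2*Δ*Real.exp α + ρ - 1)) := by
  obtain ⟨hρ0, hρ1⟩ := hρ
  have hπ : (0:ℝ) < π := Real.pi_pos
  have hρ1' : (0:ℝ) < 1 - ρ := by linarith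
  have hρp : (0:ℝ) < 1 + ρ := by linarith
  have hC : (0:ℝ) < 2*π*Real.exp 1 := by positivity
  have ht : 0 < Δ * Real.exp α := by positivity
  have hs : (0:ℝ) < 2*Δ*Real.exp α - 1 + ρ := by nlinarith
  set m : ℝ := Δ * Real.exp α / (2*Δ*Real.exp α - 1 + ρ) with hm_def
  have hm2 : 2*m - 1 = (1-ρ)/(2*Δ*Real.exp α - 1 + ρ) := by
    rw [hm_def]; field_simp; ring
  have hm2pos : 0 < 2*m - 1 := by rw [hm2]; positivity
  have hmhalf : 1/2 < m := by linarith
  have hm0 : 0 < m := by linarith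
  have hlogm : Real.log m = Real.log Δ + α - Real.log (2*Δ*Real.exp α - 1 + ρ) := by
    rw [hm_def, Real.log_div ht.ne' hs.ne', Real.log_mul hΔ.ne' (Real.exp_pos α).ne',
        Real.log_exp]
  have hlog2m : Real.log (2*m - 1) = Real.log (1-ρ) - Real.log (2*Δ*Real.exp α - 1 + ρ) := by
    rw [hm2, Real.log_div hρ1'.ne' hs.ne']
  have hc : -α - Real.log Δ + Real.log (1-ρ) = Real.log (2*m - 1) - Real.log m := by
    rw [hlogm, hlog2m]; ring
  constructor
  · intro ν hν
    have hν1 : 1/(1+ρ) ≤ ν := hν.1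
    have hν2 : ν ≤ 1 := hν.2
    have hhalf : (1:ℝ)/2 < 1/(1+ρ) := by
      rw [div_lt_div_iff₀ (by norm_num) hρp]; linarith
    have hνh : 1/2 < ν := lt_of_lt_of_le hhalf hν1
    have hν0 : (0:ℝ) < ν := by linarith
    have h2ν : (0:ℝ) < 2*ν - 1 := by linarith
    rw [ell_eq ρ Δ α ν hρ1' hΔ hνh, ell_eq ρ Δ α m hρ1' hΔ hmhalf, hc]
    have star := key_log (2*ν - 1) (2*m - 1) h2ν hm2pos
    rw [show 2*ν - 1 + 1 = 2*ν by ring, show 2*m - 1 + 1 = 2*m by ring,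
        Real.log_mul two_ne_zero hν0.ne', Real.log_mul two_ne_zero hm0.ne'] at star
    nlinarith [star]
  · rw [ell_eq ρ Δ α m hρ1' hΔ hmhalf, hc]
    have hK : Real.log ((2*π*Real.exp 1)^2 * (1 - ρ^2))
        = 2*Real.log (2*π*Real.exp 1) + Real.log (1-ρ) + Real.log (1+ρ) := by
      rw [show (2*π*Real.exp 1)^2 * (1 - ρ^2)
            = (2*π*Real.exp 1*(1-ρ))*(2*π*Real.exp 1*(1+ρ)) by ring,
          Real.log_mul (by positivity) (by positivity),
          Real.log_mul hC.ne' hρ1'.ne', Real.log_mul hC.ne' hρp.ne']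
      ring
    have hL : Real.log (2*π*Real.exp 1*(1-ρ)) = Real.log (2*π*Real.exp 1) + Real.log (1-ρ) :=
      Real.log_mul hC.ne' hρ1'.ne'
    have hRHS : Real.log ((1+ρ)/(2*Δ*Real.exp α + ρ - 1))
        = Real.log (1+ρ) - Real.log (2*Δ*Real.exp α - 1 + ρ) := by
      rw [show 2*Δ*Real.exp α + ρ - 1 = 2*Δ*Real.exp α - 1 + ρ by ring,
          Real.log_div hρp.ne' hs.ne']
    rw [hK, hL, hRHS]
    nlinarith [hlog2m, hlogm]
end

section
/- Suppose Δ·e^α ≤ 1−ρ with ρ ∈ (0,1), Δ > 0, α ≥ 0. Then ℓ is nondecreasing on [1/(1+ρ), 1], and its maximum over this interval is attained at ν = 1 with value ℓ(1) = (1/2)·log((1−ρ²)/(Δ²e^{2α})). -/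
open Real Set

lemma ell_hasDerivAt (ρ Δ α : ℝ) (hρ1 : ρ < 1) (hΔ : 0 < Δ) {ν : ℝ}
    (hν : 1/2 < ν) :
    HasDerivAt (ell ρ Δ α)
      (Real.log ((1-ρ)*ν) - Real.log (Δ * Real.exp α * (2*ν-1))) ν := by
  have hν0 : 0 < ν := by linarith
  have h2 : 0 < 2*ν - 1 := by linarith
  have hπ : 0 < π := Real.pi_pos
  have he : 0 < Real.exp 1 := Real.exp_pos 1
  have hρ' : 0 < 1 - ρ := by linarith
  have hlin : HasDerivAt (fun ν : ℝ => 2*ν - 1) 2 ν := by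
    simpa using ((hasDerivAt_id ν).const_mul 2).sub_const 1
  have hsq : HasDerivAt (fun ν : ℝ => ν^2) (2*ν) ν := by
    simpa using hasDerivAt_pow 2 ν
  have hq' : HasDerivAt (fun ν : ℝ => Real.log (ν^2/(2*ν-1)))
      (((2*ν*(2*ν-1) - ν^2*2)/(2*ν-1)^2) / (ν^2/(2*ν-1))) ν :=
    (hsq.div hlin h2.ne').log (div_pos (pow_pos hν0 2) h2).ne'
  have hK' : HasDerivAt (fun ν : ℝ => Real.log ((2*π*Real.exp 1)^2*(1-ρ)^2/(2*ν-1)))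
      (((0*(2*ν-1) - (2*π*Real.exp 1)^2*(1-ρ)^2*2)/(2*ν-1)^2) /
        ((2*π*Real.exp 1)^2*(1-ρ)^2/(2*ν-1))) ν :=
    ((hasDerivAt_const ν _).div hlin h2.ne').log
      (div_pos (mul_pos (pow_pos (by positivity) 2) (pow_pos hρ' 2)) h2).ne'
  have H := ((((hasDerivAt_const ν ((1/2) * Real.log ((2*π*Real.exp 1)^2 * (1 - ρ^2)))).sub
      ((hasDerivAt_id ν).mul_const α)).sub
      ((hasDerivAt_id ν).mul_const (Real.log (2*π*Real.exp 1*Δ)))).add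
      (((hasDerivAt_id ν).div_const 2).mul hq')).sub
      ((((hasDerivAt_const ν 1).sub (hasDerivAt_id ν)).div_const 2).mul hK')
  have H2 : HasDerivAt (ell ρ Δ α) _ ν := H
  convert H2 using 1
  have l1 : Real.log (ν^2/(2*ν-1)) = 2 * Real.log ν - Real.log (2*ν-1) := by
    rw [Real.log_div (by positivity) h2.ne', Real.log_pow]; push_cast; ring
  have l2 : Real.log ((2*π*Real.exp 1)^2*(1-ρ)^2/(2*ν-1))
      = 2 * Real.log (2*π*Real.exp 1) + 2 * Real.log (1-ρ) - Real.log (2*ν-1) := by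
    rw [Real.log_div (by positivity) h2.ne', Real.log_mul (by positivity) (by positivity),
      Real.log_pow, Real.log_pow]; push_cast; ring
  have l3 : Real.log (2*π*Real.exp 1*Δ) = Real.log (2*π*Real.exp 1) + Real.log Δ :=
    Real.log_mul (by positivity) hΔ.ne'
  have l4 : Real.log ((1-ρ)*ν) = Real.log (1-ρ) + Real.log ν :=
    Real.log_mul hρ'.ne' hν0.ne'
  have l5 : Real.log (Δ * Real.exp α * (2*ν-1))
      = Real.log Δ + α + Real.log (2*ν-1) := by
    rw [Real.log_mul (by positivity) h2.ne', Real.log_mul hΔ.ne' (Real.exp_ne_zero α),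
      Real.log_exp]
  rw [l1, l2, l3, l4, l5]
  simp only [id_eq, Pi.sub_apply]
  field_simp
  ring

theorem stmt_4 (ρ Δ α : ℝ) (hρ : ρ ∈ Set.Ioo (0:ℝ) 1) (hΔ : 0 < Δ) (hα : 0 ≤ α)
    (h : Δ * Real.exp α ≤ 1 - ρ) :
    MonotoneOn (ell ρ Δ α) (Set.Icc (1/(1+ρ)) 1) ∧
    (∀ ν ∈ Set.Icc (1/(1+ρ)) 1, ell ρ Δ α ν ≤ ell ρ Δ α 1) ∧
    ell ρ Δ α 1 = (1/2) * Real.log ((1 - ρ^2)/(Δ^2 * Real.exp (2*α))) := by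
  obtain ⟨hρ0, hρ1⟩ := hρ
  have hπ : 0 < π := Real.pi_pos
  have he : 0 < Real.exp 1 := Real.exp_pos 1
  have hρ2 : 0 < 1 - ρ^2 := by nlinarith
  have ha2 : 1/2 < 1/(1+ρ) := by
    rw [div_lt_div_iff₀ (by norm_num) (by linarith)]; linarith
  have ha1 : 1/(1+ρ) ≤ 1 := by
    rw [div_le_one (by linarith)]; linarith
  have hmono : MonotoneOn (ell ρ Δ α) (Set.Icc (1/(1+ρ)) 1) := by
    apply monotoneOn_of_deriv_nonneg (convex_Icc _ _)
    · exact fun ν hν =>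
        (ell_hasDerivAt ρ Δ α hρ1 hΔ (lt_of_lt_of_le ha2 hν.1)).continuousAt.continuousWithinAt
    · intro ν hν
      rw [interior_Icc] at hν
      exact ((ell_hasDerivAt ρ Δ α hρ1 hΔ
        (lt_of_lt_of_le ha2 hν.1.le)).differentiableAt).differentiableWithinAt
    · intro ν hν
      rw [interior_Icc] at hν
      have hν2 : 1/2 < ν := lt_of_lt_of_le ha2 hν.1.le
      rw [(ell_hasDerivAt ρ Δ α hρ1 hΔ hν2).deriv]
      have h2 : 0 < 2*ν - 1 := by linarith
      have hE : 0 < Δ * Real.exp α := by positivity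
      have hle : Δ * Real.exp α * (2*ν-1) ≤ (1-ρ)*ν := by nlinarith [hν.2]
      have := Real.log_le_log (by positivity) hle
      linarith
  refine ⟨hmono, fun ν hν => hmono hν ⟨ha1, le_refl 1⟩ hν.2, ?_⟩
  have e1 : ell ρ Δ α 1 = (1/2) * Real.log ((2*π*Real.exp 1)^2 * (1 - ρ^2))
      - α - Real.log (2*π*Real.exp 1*Δ) := by
    norm_num [ell]
  have hA : Real.log ((2*π*Real.exp 1)^2 * (1 - ρ^2))
      = 2 * Real.log (2*π*Real.exp 1) + Real.log (1 - ρ^2) := by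
    rw [Real.log_mul (by positivity) hρ2.ne', Real.log_pow]; push_cast; ring
  have hB : Real.log (2*π*Real.exp 1*Δ) = Real.log (2*π*Real.exp 1) + Real.log Δ :=
    Real.log_mul (by positivity) hΔ.ne'
  have hC : Real.log ((1 - ρ^2)/(Δ^2 * Real.exp (2*α)))
      = Real.log (1 - ρ^2) - (2 * Real.log Δ + 2*α) := by
    rw [Real.log_div hρ2.ne' (by positivity),
      Real.log_mul (by positivity) (Real.exp_ne_zero _), Real.log_pow, Real.log_exp]
    push_cast; ring
  rw [e1, hA, hB, hC]
  ring
end
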